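/- Let D = {(x,t_2,t_3) ∈ ℝ³ : x⁶ + 45 x t_3 − 15 t_2 x³ − 45 t_2² ≠ 0} and define on D the rational function q(x,t_2,t_3) = −3(675 t_3² − 270 t_3 x⁵ + 2 x¹⁰ + 675 x⁴ t_2² − 1350 x t_2³) / (x⁶ + 45 x t_3 − 15 t_2 x³ − 45 t_2²)². Then q is a simultaneous solution on D of the second and third KdV flows: ∂q/∂t_2 = (1/4)∂_x³q + 3 q ∂_x q and ∂q/∂t_3 = (1/16)∂_x⁵q + (5/2)(∂_x q)(∂_x² q) + (5/4) q ∂_x³ q + (15/2) q² ∂_x q. -/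

import Mathlib

set_option maxHeartbeats 4000000

/-- The rational zero-energy solution of the KdV hierarchy:
`q(x,t₂,t₃) = −3(675t₃² − 270t₃x⁵ + 2x¹⁰ + 675x⁴t₂² − 1350xt₂³)
/ (x⁶ + 45xt₃ − 15t₂x³ − 45t₂²)²`. -/
noncomputable def qsol (x t2 t3 : ℝ) : ℝ :=
  -3 * (675 * t3 ^ 2 - 270 * t3 * x ^ 5 + 2 * x ^ 10 + 675 * x ^ 4 * t2 ^ 2
      - 1350 * x * t2 ^ 3)
    / (x ^ 6 + 45 * x * t3 - 15 * t2 * x ^ 3 - 45 * t2 ^ 2) ^ 2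

noncomputable def d6 (x t2 t3 : ℝ) : ℝ := x ^ 6 + 45 * x * t3 - 15 * t2 * x ^ 3 - 45 * t2 ^ 2

noncomputable def p0 (x t2 t3 : ℝ) : ℝ := -6 * x ^ 10 + 810 * t3 * x ^ 5 + -2025 * t2 ^ 2 * x ^ 4 + 4050 * t2 ^ 3 * x ^ 1 + -2025 * t3 ^ 2

noncomputable def p1 (x t2 t3 : ℝ) : ℝ := 12 * x ^ 15 + 360 * t2 * x ^ 12 + -7830 * t3 * x ^ 10 + 18900 * t2 ^ 2 * x ^ 9 + 12150 * t2 * t3 * x ^ 7 + -105300 * t2 ^ 3 * x ^ 6 + 133650 * t3 ^ 2 * x ^ 5 + -364500 * t2 ^ 2 * t3 * x ^ 4 + 668250 * t2 ^ 4 * x ^ 3 + -182250 * t2 * t3 ^ 2 * x ^ 2 + -182250 * t2 ^ 3 * t3 * x ^ 1 + -182250 * t2 ^ 5 + 182250 * t3 ^ 3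

noncomputable def p2 (x t2 t3 : ℝ) : ℝ := -36 * x ^ 20 + -3240 * t2 * x ^ 17 + 69120 * t3 * x ^ 15 + -194400 * t2 ^ 2 * x ^ 14 + 129600 * t2 * t3 * x ^ 12 + 1069200 * t2 ^ 3 * x ^ 11 + -4203900 * t3 ^ 2 * x ^ 10 + 14094000 * t2 ^ 2 * t3 * x ^ 9 + -22416750 * t2 ^ 4 * x ^ 8 + 13122000 * t2 * t3 ^ 2 * x ^ 7 + -42282000 * t2 ^ 3 * t3 * x ^ 6 + 91854000 * t2 ^ 5 * x ^ 5 + 8748000 * t3 ^ 3 * x ^ 5 + -65610000 * t2 ^ 2 * t3 ^ 2 * x ^ 4 + 43740000 * t2 ^ 4 * t3 * x ^ 3 + -114817500 * t2 ^ 6 * x ^ 2 + 32805000 * t2 * t3 ^ 3 * x ^ 2 + 32805000 * t2 ^ 3 * t3 ^ 2 * x ^ 1 + 32805000 * t2 ^ 5 * t3 + -24603750 * t3 ^ 4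

noncomputable def p3 (x t2 t3 : ℝ) : ℝ := 144 * x ^ 25 + 27000 * t2 * x ^ 22 + -648000 * t3 * x ^ 20 + 2219400 * t2 ^ 2 * x ^ 19 + -6561000 * t2 * t3 * x ^ 17 + -5589000 * t2 ^ 3 * x ^ 16 + 93069000 * t3 ^ 2 * x ^ 15 + -345546000 * t2 ^ 2 * t3 * x ^ 14 + 497178000 * t2 ^ 4 * x ^ 13 + -302535000 * t2 * t3 ^ 2 * x ^ 12 + 1662120000 * t2 ^ 3 * t3 * x ^ 11 + -3619485000 * t2 ^ 5 * x ^ 10 + -1301265000 * t3 ^ 3 * x ^ 10 + 7359255000 * t2 ^ 2 * t3 ^ 2 * x ^ 9 + -14467005000 * t2 ^ 4 * t3 * x ^ 8 + 20240685000 * t2 ^ 6 * x ^ 7 + 1968300000 * t2 * t3 ^ 3 * x ^ 7 + -16566525000 * t2 ^ 3 * t3 ^ 2 * x ^ 6 + 20667150000 * t2 ^ 5 * t3 * x ^ 5 + 984150000 * t3 ^ 4 * x ^ 5 + -37889775000 * t2 ^ 7 * x ^ 4 + 2952450000 * t2 ^ 2 * t3 ^ 3 * x ^ 4 + 15254325000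 * t2 ^ 4 * t3 ^ 2 * x ^ 3 + 10333575000 * t2 ^ 6 * t3 * x ^ 2 + -7381125000 * t2 * t3 ^ 4 * x ^ 2 + 10333575000 * t2 ^ 8 * x ^ 1 + -7381125000 * t2 ^ 3 * t3 ^ 3 * x ^ 1 + -7381125000 * t2 ^ 5 * t3 ^ 2 + 4428675000 * t3 ^ 5

noncomputable def p4 (x t2 t3 : ℝ) : ℝ := -720 * x ^ 30 + -237600 * t2 * x ^ 27 + 6609600 * t3 * x ^ 25 + -27410400 * t2 ^ 2 * x ^ 24 + 154548000 * t2 * t3 * x ^ 22 + -81648000 * t2 ^ 3 * x ^ 21 + -1833435000 * t3 ^ 2 * x ^ 20 + 7706988000 * t2 ^ 2 * t3 * x ^ 19 + -10265778000 * t2 ^ 4 * x ^ 18 + 1902690000 * t2 * t3 ^ 2 * x ^ 17 + -34510860000 * t2 ^ 3 * t3 * x ^ 16 + 91329120000 * t2 ^ 5 * x ^ 15 + 67906350000 * t3 ^ 3 * x ^ 15 + -370926135000 * t2 ^ 2 * t3 ^ 2 * x ^ 14 + 814679370000 * t2 ^ 4 * t3 * x ^ 13 + -1027846260000 * t2 ^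 6 * x ^ 12 + -238164300000 * t2 * t3 ^ 3 * x ^ 12 + 1672070850000 * t2 ^ 3 * t3 ^ 2 * x ^ 11 + -3672847800000 * t2 ^ 5 * t3 * x ^ 10 + -317388375000 * t3 ^ 4 * x ^ 10 + 5042784600000 * t2 ^ 7 * x ^ 9 + 2069667450000 * t2 ^ 2 * t3 ^ 3 * x ^ 9 + -7581891600000 * t2 ^ 4 * t3 ^ 2 * x ^ 8 + 9840515850000 * t2 ^ 6 * t3 * x ^ 7 + 531441000000 * t2 * t3 ^ 4 * x ^ 7 + -12927302325000 * t2 ^ 8 * x ^ 6 + -664301250000 * t2 ^ 3 * t3 ^ 3 * x ^ 6 + 7440174000000 * t2 ^ 5 * t3 ^ 2 * x ^ 5 + -132860250000 * t3 ^ 5 * x ^ 5 + -930021750000 * t2 ^ 7 * t3 * x ^ 4 + -1793613375000 * t2 ^ 2 * t3 ^ 4 * x ^ 4 + 8990210250000 * t2 ^ 9 * x ^ 3 + -3454366500000 * t2 ^ 4 * t3 ^ 3 * x ^ 3 + -5115119625000 * t2 ^ 6 * t3 ^ 2 * x ^ 2 + 1992903750000 * t2 * t3 ^ 5 * x ^ 2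 + -2790065250000 * t2 ^ 8 * t3 * x ^ 1 + 1992903750000 * t2 ^ 3 * t3 ^ 4 * x ^ 1 + -465010875000 * t2 ^ 10 + 1992903750000 * t2 ^ 5 * t3 ^ 3 + -996451875000 * t3 ^ 6

noncomputable def p5 (x t2 t3 : ℝ) : ℝ := 4320 * x ^ 35 + 2268000 * t2 * x ^ 32 + -73483200 * t3 * x ^ 30 + 361972800 * t2 ^ 2 * x ^ 29 + -3082212000 * t2 * t3 * x ^ 27 + 3980340000 * t2 ^ 3 * x ^ 26 + 34986168000 * t3 ^ 2 * x ^ 25 + -169929900000 * t2 ^ 2 * t3 * x ^ 24 + 218061396000 * t2 ^ 4 * x ^ 23 + 130126500000 * t2 * t3 ^ 2 * x ^ 22 + 366497460000 * t2 ^ 3 * t3 * x ^ 21 + -1840754160000 * t2 ^ 5 * x ^ 20 + -2581097400000 * t3 ^ 3 * x ^ 20 + 14347594800000 * t2 ^ 2 * t3 ^ 2 * x ^ 19 + -31905946170000 * t2 ^ 4 * t3 * x ^ 18 + 37093400820000 * t2 ^ 6 * x ^ 17 + 9713560500000 * t2 * t3 ^ 3 * x ^ 17 + -81042784200000 * t2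 ^ 3 * t3 ^ 2 * x ^ 16 + 218431108350000 * t2 ^ 5 * t3 * x ^ 15 + 35754169500000 * t3 ^ 4 * x ^ 15 + -290308503600000 * t2 ^ 7 * x ^ 14 + -256686003000000 * t2 ^ 2 * t3 ^ 3 * x ^ 14 + 878167870650000 * t2 ^ 4 * t3 ^ 2 * x ^ 13 + -1480222617300000 * t2 ^ 6 * t3 * x ^ 12 + -117802755000000 * t2 * t3 ^ 4 * x ^ 12 + 1623631971150000 * t2 ^ 8 * x ^ 11 + 804158806500000 * t2 ^ 3 * t3 ^ 3 * x ^ 11 + -2856716808750000 * t2 ^ 5 * t3 ^ 2 * x ^ 10 + -53011239750000 * t3 ^ 5 * x ^ 10 + 3987003242250000 * t2 ^ 7 * t3 * x ^ 9 + 567313267500000 * t2 ^ 2 * t3 ^ 4 * x ^ 9 + -4665919119750000 * t2 ^ 9 * x ^ 8 + -1526165691750000 * t2 ^ 4 * t3 ^ 3 * x ^ 8 + 4797052186500000 * t2 ^ 6 * t3 ^ 2 * x ^ 7 + -69751631250000 * t2 * t3 ^ 5 * x ^ 7 + -3197414776500000 * t2 ^ 8 * t3 * x ^ 6 + -613814355000000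 * t2 ^ 3 * t3 ^ 4 * x ^ 6 + 5529909325500000 * t2 ^ 10 * x ^ 5 + -1004423490000000 * t2 ^ 5 * t3 ^ 3 * x ^ 5 + 41850978750000 * t3 ^ 6 * x ^ 5 + -2817965902500000 * t2 ^ 7 * t3 ^ 2 * x ^ 4 + 669615660000000 * t2 ^ 2 * t3 ^ 5 * x ^ 4 + -1757741107500000 * t2 ^ 9 * t3 * x ^ 3 + 1297380341250000 * t2 ^ 4 * t3 ^ 4 * x ^ 3 + -1339231320000000 * t2 ^ 11 * x ^ 2 + 1925145022500000 * t2 ^ 6 * t3 ^ 3 * x ^ 2 + -627764681250000 * t2 * t3 ^ 6 * x ^ 2 + 1088125447500000 * t2 ^ 8 * t3 ^ 2 * x ^ 1 + -627764681250000 * t2 ^ 3 * t3 ^ 5 * x ^ 1 + 251105872500000 * t2 ^ 10 * t3 + -627764681250000 * t2 ^ 5 * t3 ^ 4 + 269042006250000 * t3 ^ 7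

noncomputable def q2n (x t2 t3 : ℝ) : ℝ := -180 * x ^ 13 + -5130 * t2 * x ^ 10 + 24300 * t3 * x ^ 8 + 12150 * t2 ^ 2 * x ^ 7 + -36450 * t2 * t3 * x ^ 5 + -243000 * t2 ^ 3 * x ^ 4 + -60750 * t3 ^ 2 * x ^ 3 + 546750 * t2 ^ 2 * t3 * x ^ 2 + 182250 * t2 ^ 4 * x ^ 1 + -364500 * t2 * t3 ^ 2

noncomputable def q3n (x t2 t3 : ℝ) : ℝ := 1350 * x ^ 11 + -12150 * t2 * x ^ 8 + -40500 * t3 * x ^ 6 + 145800 * t2 ^ 2 * x ^ 5 + 60750 * t2 * t3 * x ^ 3 + -364500 * t2 ^ 3 * x ^ 2 + 182250 * t2 ^ 2 * t3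

lemma hasDerivAt_div_pow {P dF : ℝ → ℝ} {y P' D' : ℝ} (n : ℕ)
    (hP : HasDerivAt P P' y) (hd : HasDerivAt dF D' y) (h0 : dF y ≠ 0) :
    HasDerivAt (fun z => P z / dF z ^ (n + 1))
      ((P' * dF y - (n + 1 : ℝ) * D' * P y) / dF y ^ (n + 2)) y := by
  have h2 := hd.fun_pow (n + 1)
  have H := hP.fun_div h2 (pow_ne_zero _ h0)
  refine H.congr_deriv (Eq.symm ?_)
  rw [div_eq_div_iff (pow_ne_zero _ h0) (pow_ne_zero _ (pow_ne_zero _ h0))]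
  simp only [Nat.add_sub_cancel]
  push_cast
  ring

lemma step0 (t2 t3 : ℝ) : ∀ y : ℝ, d6 y t2 t3 ≠ 0 →
    HasDerivAt (fun z => qsol z t2 t3) (p1 y t2 t3 / d6 y t2 t3 ^ 3) y := by
  intro y h
  have hP : HasDerivAt (fun z => -3 * (675 * t3 ^ 2 - 270 * t3 * z ^ 5 + 2 * z ^ 10 + 675 * z ^ 4 * t2 ^ 2
      - 1350 * z * t2 ^ 3)) (-60 * y ^ 9 + 4050 * t3 * y ^ 4 + -8100 * t2 ^ 2 * y ^ 3 + 4050 * t2 ^ 3) y :=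
    ((((((hasDerivAt_const y (675 * t3 ^ 2)).sub ((hasDerivAt_pow 5 y).const_mul (270 * t3))).add ((hasDerivAt_pow 10 y).const_mul 2)).add (((hasDerivAt_pow 4 y).const_mul 675).mul_const (t2 ^ 2))).sub (((hasDerivAt_id y).const_mul 1350).mul_const (t2 ^ 3))).const_mul (-3)).congr_deriv (by push_cast; ring)
  have hdd : HasDerivAt (fun z => d6 z t2 t3) (6 * y ^ 5 + -45 * t2 * y ^ 2 + 45 * t3) y :=
    ((((hasDerivAt_pow 6 y).add (((hasDerivAt_id y).const_mul 45).mul_const t3)).sub ((hasDerivAt_pow 3 y).const_mul (15 * t2))).sub (hasDerivAt_const y (45 * t2 ^ 2))).congr_deriv (by push_cast; ring)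
  have hnum : p1 y t2 t3 = (-60 * y ^ 9 + 4050 * t3 * y ^ 4 + -8100 * t2 ^ 2 * y ^ 3 + 4050 * t2 ^ 3) * d6 y t2 t3 - (((1 : ℕ) : ℝ) + 1) * (6 * y ^ 5 + -45 * t2 * y ^ 2 + 45 * t3) * (-3 * (675 * t3 ^ 2 - 270 * t3 * y ^ 5 + 2 * y ^ 10 + 675 * y ^ 4 * t2 ^ 2 - 1350 * y * t2 ^ 3)) := by
    simp only [p1, d6]; push_cast; ring
  exact (hasDerivAt_div_pow 1 hP hdd h).congr_deriv (by rw [hnum])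

lemma step1 (t2 t3 : ℝ) : ∀ y : ℝ, d6 y t2 t3 ≠ 0 →
    HasDerivAt (fun z => p1 z t2 t3 / d6 z t2 t3 ^ 3)
      (p2 y t2 t3 / d6 y t2 t3 ^ 4) y := by
  intro y h
  have hP : HasDerivAt (fun z => p1 z t2 t3) (180 * y ^ 14 + 4320 * t2 * y ^ 11 + -78300 * t3 * y ^ 9 + 170100 * t2 ^ 2 * y ^ 8 + 85050 * t2 * t3 * y ^ 6 + -631800 * t2 ^ 3 * y ^ 5 + 668250 * t3 ^ 2 * y ^ 4 + -1458000 * t2 ^ 2 * t3 * y ^ 3 + 2004750 * t2 ^ 4 * y ^ 2 + -364500 * t2 * t3 ^ 2 * y ^ 1 + -182250 * t2 ^ 3 * t3) y :=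
    ((((((((((((((hasDerivAt_pow 15 y).const_mul (12)).add ((hasDerivAt_pow 12 y).const_mul (360 * t2))).add ((hasDerivAt_pow 10 y).const_mul (-7830 * t3))).add ((hasDerivAt_pow 9 y).const_mul (18900 * t2 ^ 2))).add ((hasDerivAt_pow 7 y).const_mul (12150 * t2 * t3))).add ((hasDerivAt_pow 6 y).const_mul (-105300 * t2 ^ 3))).add ((hasDerivAt_pow 5 y).const_mul (133650 * t3 ^ 2))).add ((hasDerivAt_pow 4 y).const_mul (-364500 * t2 ^ 2 * t3))).add ((hasDerivAt_pow 3 y).const_mul (668250 * t2 ^ 4))).add ((hasDerivAt_pow 2 y).const_mul (-182250 * t2 * t3 ^ 2))).add ((hasDerivAt_pow 1 y).const_mul (-182250 * t2 ^ 3 * t3))).add (hasDerivAt_const y (-182250 * t2 ^ 5))).add (hasDerivAt_const y (182250 * t3 ^ 3))).congr_deriv (by push_cast; ring)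
  have hdd : HasDerivAt (fun z => d6 z t2 t3) (6 * y ^ 5 + -45 * t2 * y ^ 2 + 45 * t3) y :=
    ((((hasDerivAt_pow 6 y).add (((hasDerivAt_id y).const_mul 45).mul_const t3)).sub ((hasDerivAt_pow 3 y).const_mul (15 * t2))).sub (hasDerivAt_const y (45 * t2 ^ 2))).congr_deriv (by push_cast; ring)
  have hnum : p2 y t2 t3 = (180 * y ^ 14 + 4320 * t2 * y ^ 11 + -78300 * t3 * y ^ 9 + 170100 * t2 ^ 2 * y ^ 8 + 85050 * t2 * t3 * y ^ 6 + -631800 * t2 ^ 3 * y ^ 5 + 668250 * t3 ^ 2 * y ^ 4 + -1458000 * t2 ^ 2 * t3 * y ^ 3 + 2004750 * t2 ^ 4 * y ^ 2 + -364500 * t2 * t3 ^ 2 * y ^ 1 + -182250 * t2 ^ 3 * t3) * d6 y t2 t3 - (((2 : ℕ) : ℝ) + 1) * (6 * y ^ 5 + -45 * t2 * y ^ 2 + 45 * t3) * p1 y t2 t3 := by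
    simp only [p1, p2, d6]; push_cast; ring
  exact (hasDerivAt_div_pow 2 hP hdd h).congr_deriv (by rw [hnum])

lemma step2 (t2 t3 : ℝ) : ∀ y : ℝ, d6 y t2 t3 ≠ 0 →
    HasDerivAt (fun z => p2 z t2 t3 / d6 z t2 t3 ^ 4)
      (p3 y t2 t3 / d6 y t2 t3 ^ 5) y := by
  intro y h
  have hP : HasDerivAt (fun z => p2 z t2 t3) (-720 * y ^ 19 + -55080 * t2 * y ^ 16 + 1036800 * t3 * y ^ 14 + -2721600 * t2 ^ 2 * y ^ 13 + 1555200 * t2 * t3 * y ^ 11 + 11761200 * t2 ^ 3 * y ^ 10 + -42039000 * t3 ^ 2 * y ^ 9 + 126846000 * t2 ^ 2 * t3 * y ^ 8 + -179334000 * t2 ^ 4 * y ^ 7 + 91854000 * t2 * t3 ^ 2 * y ^ 6 + -253692000 * t2 ^ 3 * t3 * y ^ 5 + 459270000 * t2 ^ 5 * y ^ 4 + 43740000 * t3 ^ 3 * y ^ 4 + -262440000 * t2 ^ 2 * t3 ^ 2 * y ^ 3 + 131220000 * t2 ^ 4 * t3 * y ^ 2 + -229635000 * t2 ^ 6 * y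 ^ 1 + 65610000 * t2 * t3 ^ 3 * y ^ 1 + 32805000 * t2 ^ 3 * t3 ^ 2) y :=
    (((((((((((((((((((((hasDerivAt_pow 20 y).const_mul (-36)).add ((hasDerivAt_pow 17 y).const_mul (-3240 * t2))).add ((hasDerivAt_pow 15 y).const_mul (69120 * t3))).add ((hasDerivAt_pow 14 y).const_mul (-194400 * t2 ^ 2))).add ((hasDerivAt_pow 12 y).const_mul (129600 * t2 * t3))).add ((hasDerivAt_pow 11 y).const_mul (1069200 * t2 ^ 3))).add ((hasDerivAt_pow 10 y).const_mul (-4203900 * t3 ^ 2))).add ((hasDerivAt_pow 9 y).const_mul (14094000 * t2 ^ 2 * t3))).add ((hasDerivAt_pow 8 y).const_mul (-22416750 * t2 ^ 4))).add ((hasDerivAt_pow 7 y).const_mul (13122000 * t2 * t3 ^ 2))).add ((hasDerivAt_pow 6 y).const_mul (-42282000 * t2 ^ 3 * t3))).add ((hasDerivAt_pow 5 y).const_mul (91854000 * t2 ^ 5))).add ((hasDerivAt_pow 5 y).const_mul (8748000 * t3 ^ 3))).add ((hasDerivAt_pow 4 y).const_mul (-65610000 * t2 ^ 2 * t3 ^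 2))).add ((hasDerivAt_pow 3 y).const_mul (43740000 * t2 ^ 4 * t3))).add ((hasDerivAt_pow 2 y).const_mul (-114817500 * t2 ^ 6))).add ((hasDerivAt_pow 2 y).const_mul (32805000 * t2 * t3 ^ 3))).add ((hasDerivAt_pow 1 y).const_mul (32805000 * t2 ^ 3 * t3 ^ 2))).add (hasDerivAt_const y (32805000 * t2 ^ 5 * t3))).add (hasDerivAt_const y (-24603750 * t3 ^ 4))).congr_deriv (by push_cast; ring)
  have hdd : HasDerivAt (fun z => d6 z t2 t3) (6 * y ^ 5 + -45 * t2 * y ^ 2 + 45 * t3) y :=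
    ((((hasDerivAt_pow 6 y).add (((hasDerivAt_id y).const_mul 45).mul_const t3)).sub ((hasDerivAt_pow 3 y).const_mul (15 * t2))).sub (hasDerivAt_const y (45 * t2 ^ 2))).congr_deriv (by push_cast; ring)
  have hnum : p3 y t2 t3 = (-720 * y ^ 19 + -55080 * t2 * y ^ 16 + 1036800 * t3 * y ^ 14 + -2721600 * t2 ^ 2 * y ^ 13 + 1555200 * t2 * t3 * y ^ 11 + 11761200 * t2 ^ 3 * y ^ 10 + -42039000 * t3 ^ 2 * y ^ 9 + 126846000 * t2 ^ 2 * t3 * y ^ 8 + -179334000 * t2 ^ 4 * y ^ 7 + 91854000 * t2 * t3 ^ 2 * y ^ 6 + -253692000 * t2 ^ 3 * t3 * y ^ 5 + 459270000 * t2 ^ 5 * y ^ 4 + 43740000 * t3 ^ 3 * y ^ 4 + -262440000 * t2 ^ 2 * t3 ^ 2 * y ^ 3 + 131220000 * t2 ^ 4 * t3 * y ^ 2 + -229635000 * t2 ^ 6 * y ^ 1 + 65610000 * t2 * t3 ^ 3 * y ^ 1 + 32805000 * t2 ^ 3 * t3 ^ 2) * d6 y t2 t3 - (((3 : ℕ)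 : ℝ) + 1) * (6 * y ^ 5 + -45 * t2 * y ^ 2 + 45 * t3) * p2 y t2 t3 := by
    simp only [p2, p3, d6]; push_cast; ring
  exact (hasDerivAt_div_pow 3 hP hdd h).congr_deriv (by rw [hnum])

lemma step3 (t2 t3 : ℝ) : ∀ y : ℝ, d6 y t2 t3 ≠ 0 →
    HasDerivAt (fun z => p3 z t2 t3 / d6 z t2 t3 ^ 5)
      (p4 y t2 t3 / d6 y t2 t3 ^ 6) y := by
  intro y h
  have hP : HasDerivAt (fun z => p3 z t2 t3) (3600 * y ^ 24 + 594000 * t2 * y ^ 21 + -12960000 * t3 * y ^ 19 + 42168600 * t2 ^ 2 * y ^ 18 + -111537000 * t2 * t3 * y ^ 16 + -89424000 * t2 ^ 3 * y ^ 15 + 1396035000 * t3 ^ 2 * y ^ 14 + -4837644000 * t2 ^ 2 * t3 * y ^ 13 + 6463314000 * t2 ^ 4 * y ^ 12 + -3630420000 * t2 * t3 ^ 2 * y ^ 11 + 18283320000 * t2 ^ 3 * t3 * y ^ 10 + -36194850000 * t2 ^ 5 * y ^ 9 + -13012650000 * t3 ^ 3 * y ^ 9 + 66233295000 * t2 ^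 2 * t3 ^ 2 * y ^ 8 + -115736040000 * t2 ^ 4 * t3 * y ^ 7 + 141684795000 * t2 ^ 6 * y ^ 6 + 13778100000 * t2 * t3 ^ 3 * y ^ 6 + -99399150000 * t2 ^ 3 * t3 ^ 2 * y ^ 5 + 103335750000 * t2 ^ 5 * t3 * y ^ 4 + 4920750000 * t3 ^ 4 * y ^ 4 + -151559100000 * t2 ^ 7 * y ^ 3 + 11809800000 * t2 ^ 2 * t3 ^ 3 * y ^ 3 + 45762975000 * t2 ^ 4 * t3 ^ 2 * y ^ 2 + 20667150000 * t2 ^ 6 * t3 * y ^ 1 + -14762250000 * t2 * t3 ^ 4 * y ^ 1 + 10333575000 * t2 ^ 8 + -7381125000 * t2 ^ 3 * t3 ^ 3) y :=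
    ((((((((((((((((((((((((((((((hasDerivAt_pow 25 y).const_mul (144)).add ((hasDerivAt_pow 22 y).const_mul (27000 * t2))).add ((hasDerivAt_pow 20 y).const_mul (-648000 * t3))).add ((hasDerivAt_pow 19 y).const_mul (2219400 * t2 ^ 2))).add ((hasDerivAt_pow 17 y).const_mul (-6561000 * t2 * t3))).add ((hasDerivAt_pow 16 y).const_mul (-5589000 * t2 ^ 3))).add ((hasDerivAt_pow 15 y).const_mul (93069000 * t3 ^ 2))).add ((hasDerivAt_pow 14 y).const_mul (-345546000 * t2 ^ 2 * t3))).add ((hasDerivAt_pow 13 y).const_mul (497178000 * t2 ^ 4))).add ((hasDerivAt_pow 12 y).const_mul (-302535000 * t2 * t3 ^ 2))).add ((hasDerivAt_pow 11 y).const_mul (1662120000 * t2 ^ 3 * t3))).add ((hasDerivAt_pow 10 y).const_mul (-3619485000 * t2 ^ 5))).add ((hasDerivAt_pow 10 y).const_mul (-1301265000 * t3 ^ 3))).add ((hasDerivAt_pow 9 y).const_mul (7359255000 * t2 ^ 2 * t3 ^ 2))).add ((hasDerivAt_pow 8 y).const_mul (-14467005000 * t2 ^ 4 * t3))).add ((hasDerivAt_pow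 7 y).const_mul (20240685000 * t2 ^ 6))).add ((hasDerivAt_pow 7 y).const_mul (1968300000 * t2 * t3 ^ 3))).add ((hasDerivAt_pow 6 y).const_mul (-16566525000 * t2 ^ 3 * t3 ^ 2))).add ((hasDerivAt_pow 5 y).const_mul (20667150000 * t2 ^ 5 * t3))).add ((hasDerivAt_pow 5 y).const_mul (984150000 * t3 ^ 4))).add ((hasDerivAt_pow 4 y).const_mul (-37889775000 * t2 ^ 7))).add ((hasDerivAt_pow 4 y).const_mul (2952450000 * t2 ^ 2 * t3 ^ 3))).add ((hasDerivAt_pow 3 y).const_mul (15254325000 * t2 ^ 4 * t3 ^ 2))).add ((hasDerivAt_pow 2 y).const_mul (10333575000 * t2 ^ 6 * t3))).add ((hasDerivAt_pow 2 y).const_mul (-7381125000 * t2 * t3 ^ 4))).add ((hasDerivAt_pow 1 y).const_mul (10333575000 * t2 ^ 8))).add ((hasDerivAt_pow 1 y).const_mul (-7381125000 * t2 ^ 3 * t3 ^ 3))).add (hasDerivAt_const y (-7381125000 * t2 ^ 5 * t3 ^ 2))).add (hasDerivAt_const y (4428675000 * t3 ^ 5))).congr_deriv (by push_cast; ring)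
  have hdd : HasDerivAt (fun z => d6 z t2 t3) (6 * y ^ 5 + -45 * t2 * y ^ 2 + 45 * t3) y :=
    ((((hasDerivAt_pow 6 y).add (((hasDerivAt_id y).const_mul 45).mul_const t3)).sub ((hasDerivAt_pow 3 y).const_mul (15 * t2))).sub (hasDerivAt_const y (45 * t2 ^ 2))).congr_deriv (by push_cast; ring)
  have hnum : p4 y t2 t3 = (3600 * y ^ 24 + 594000 * t2 * y ^ 21 + -12960000 * t3 * y ^ 19 + 42168600 * t2 ^ 2 * y ^ 18 + -111537000 * t2 * t3 * y ^ 16 + -89424000 * t2 ^ 3 * y ^ 15 + 1396035000 * t3 ^ 2 * y ^ 14 + -4837644000 * t2 ^ 2 * t3 * y ^ 13 + 6463314000 * t2 ^ 4 * y ^ 12 + -3630420000 * t2 * t3 ^ 2 * y ^ 11 + 18283320000 * t2 ^ 3 * t3 * y ^ 10 + -36194850000 * t2 ^ 5 * y ^ 9 + -13012650000 * t3 ^ 3 * y ^ 9 + 66233295000 * t2 ^ 2 * t3 ^ 2 * y ^ 8 + -115736040000 * t2 ^ 4 * t3 * y ^ 7 + 141684795000 * t2 ^ 6 * y ^ 6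 + 13778100000 * t2 * t3 ^ 3 * y ^ 6 + -99399150000 * t2 ^ 3 * t3 ^ 2 * y ^ 5 + 103335750000 * t2 ^ 5 * t3 * y ^ 4 + 4920750000 * t3 ^ 4 * y ^ 4 + -151559100000 * t2 ^ 7 * y ^ 3 + 11809800000 * t2 ^ 2 * t3 ^ 3 * y ^ 3 + 45762975000 * t2 ^ 4 * t3 ^ 2 * y ^ 2 + 20667150000 * t2 ^ 6 * t3 * y ^ 1 + -14762250000 * t2 * t3 ^ 4 * y ^ 1 + 10333575000 * t2 ^ 8 + -7381125000 * t2 ^ 3 * t3 ^ 3) * d6 y t2 t3 - (((4 : ℕ) : ℝ) + 1) * (6 * y ^ 5 + -45 * t2 * y ^ 2 + 45 * t3) * p3 y t2 t3 := by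
    simp only [p3, p4, d6]; push_cast; ring
  exact (hasDerivAt_div_pow 4 hP hdd h).congr_deriv (by rw [hnum])

lemma step4 (t2 t3 : ℝ) : ∀ y : ℝ, d6 y t2 t3 ≠ 0 →
    HasDerivAt (fun z => p4 z t2 t3 / d6 z t2 t3 ^ 6)
      (p5 y t2 t3 / d6 y t2 t3 ^ 7) y := by
  intro y h
  have hP : HasDerivAt (fun z => p4 z t2 t3) (-21600 * y ^ 29 + -6415200 * t2 * y ^ 26 + 165240000 * t3 * y ^ 24 + -657849600 * t2 ^ 2 * y ^ 23 + 3400056000 * t2 * t3 * y ^ 21 + -1714608000 * t2 ^ 3 * y ^ 20 + -36668700000 * t3 ^ 2 * y ^ 19 + 146432772000 * t2 ^ 2 * t3 * y ^ 18 + -184784004000 * t2 ^ 4 * y ^ 17 + 32345730000 * t2 * t3 ^ 2 * y ^ 16 + -552173760000 * t2 ^ 3 * t3 * y ^ 15 + 1369936800000 * t2 ^ 5 * y ^ 14 + 1018595250000 * t3 ^ 3 * y ^ 14 + -5192965890000 * t2 ^ 2 * t3 ^ 2 * y ^ 13 + 10590831810000 * t2 ^ 4 * t3 * y ^ 12 +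 -12334155120000 * t2 ^ 6 * y ^ 11 + -2857971600000 * t2 * t3 ^ 3 * y ^ 11 + 18392779350000 * t2 ^ 3 * t3 ^ 2 * y ^ 10 + -36728478000000 * t2 ^ 5 * t3 * y ^ 9 + -3173883750000 * t3 ^ 4 * y ^ 9 + 45385061400000 * t2 ^ 7 * y ^ 8 + 18627007050000 * t2 ^ 2 * t3 ^ 3 * y ^ 8 + -60655132800000 * t2 ^ 4 * t3 ^ 2 * y ^ 7 + 68883610950000 * t2 ^ 6 * t3 * y ^ 6 + 3720087000000 * t2 * t3 ^ 4 * y ^ 6 + -77563813950000 * t2 ^ 8 * y ^ 5 + -3985807500000 * t2 ^ 3 * t3 ^ 3 * y ^ 5 + 37200870000000 * t2 ^ 5 * t3 ^ 2 * y ^ 4 + -664301250000 * t3 ^ 5 * y ^ 4 + -3720087000000 * t2 ^ 7 * t3 * y ^ 3 + -7174453500000 * t2 ^ 2 * t3 ^ 4 * y ^ 3 + 26970630750000 * t2 ^ 9 * y ^ 2 + -10363099500000 * t2 ^ 4 * t3 ^ 3 * y ^ 2 + -10230239250000 * t2 ^ 6 * t3 ^ 2 * y ^ 1 + 3985807500000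 * t2 * t3 ^ 5 * y ^ 1 + -2790065250000 * t2 ^ 8 * t3 + 1992903750000 * t2 ^ 3 * t3 ^ 4) y :=
    (((((((((((((((((((((((((((((((((((((((((hasDerivAt_pow 30 y).const_mul (-720)).add ((hasDerivAt_pow 27 y).const_mul (-237600 * t2))).add ((hasDerivAt_pow 25 y).const_mul (6609600 * t3))).add ((hasDerivAt_pow 24 y).const_mul (-27410400 * t2 ^ 2))).add ((hasDerivAt_pow 22 y).const_mul (154548000 * t2 * t3))).add ((hasDerivAt_pow 21 y).const_mul (-81648000 * t2 ^ 3))).add ((hasDerivAt_pow 20 y).const_mul (-1833435000 * t3 ^ 2))).add ((hasDerivAt_pow 19 y).const_mul (7706988000 * t2 ^ 2 * t3))).add ((hasDerivAt_pow 18 y).const_mul (-10265778000 * t2 ^ 4))).add ((hasDerivAt_pow 17 y).const_mul (1902690000 * t2 * t3 ^ 2))).add ((hasDerivAt_pow 16 y).const_mul (-34510860000 * t2 ^ 3 * t3))).add ((hasDerivAt_pow 15 y).const_mul (91329120000 * t2 ^ 5))).add ((hasDerivAt_pow 15 y).const_mul (67906350000 * t3 ^ 3))).add ((hasDerivAt_pow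 14 y).const_mul (-370926135000 * t2 ^ 2 * t3 ^ 2))).add ((hasDerivAt_pow 13 y).const_mul (814679370000 * t2 ^ 4 * t3))).add ((hasDerivAt_pow 12 y).const_mul (-1027846260000 * t2 ^ 6))).add ((hasDerivAt_pow 12 y).const_mul (-238164300000 * t2 * t3 ^ 3))).add ((hasDerivAt_pow 11 y).const_mul (1672070850000 * t2 ^ 3 * t3 ^ 2))).add ((hasDerivAt_pow 10 y).const_mul (-3672847800000 * t2 ^ 5 * t3))).add ((hasDerivAt_pow 10 y).const_mul (-317388375000 * t3 ^ 4))).add ((hasDerivAt_pow 9 y).const_mul (5042784600000 * t2 ^ 7))).add ((hasDerivAt_pow 9 y).const_mul (2069667450000 * t2 ^ 2 * t3 ^ 3))).add ((hasDerivAt_pow 8 y).const_mul (-7581891600000 * t2 ^ 4 * t3 ^ 2))).add ((hasDerivAt_pow 7 y).const_mul (9840515850000 * t2 ^ 6 * t3))).add ((hasDerivAt_pow 7 y).const_mul (531441000000 * t2 * t3 ^ 4))).add ((hasDerivAt_pow 6 y).const_mul (-12927302325000 * t2 ^ 8))).add ((hasDerivAt_pow 6 y).const_mul (-664301250000 * t2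 ^ 3 * t3 ^ 3))).add ((hasDerivAt_pow 5 y).const_mul (7440174000000 * t2 ^ 5 * t3 ^ 2))).add ((hasDerivAt_pow 5 y).const_mul (-132860250000 * t3 ^ 5))).add ((hasDerivAt_pow 4 y).const_mul (-930021750000 * t2 ^ 7 * t3))).add ((hasDerivAt_pow 4 y).const_mul (-1793613375000 * t2 ^ 2 * t3 ^ 4))).add ((hasDerivAt_pow 3 y).const_mul (8990210250000 * t2 ^ 9))).add ((hasDerivAt_pow 3 y).const_mul (-3454366500000 * t2 ^ 4 * t3 ^ 3))).add ((hasDerivAt_pow 2 y).const_mul (-5115119625000 * t2 ^ 6 * t3 ^ 2))).add ((hasDerivAt_pow 2 y).const_mul (1992903750000 * t2 * t3 ^ 5))).add ((hasDerivAt_pow 1 y).const_mul (-2790065250000 * t2 ^ 8 * t3))).add ((hasDerivAt_pow 1 y).const_mul (1992903750000 * t2 ^ 3 * t3 ^ 4))).add (hasDerivAt_const y (-465010875000 * t2 ^ 10))).add (hasDerivAt_const y (1992903750000 * t2 ^ 5 * t3 ^ 3))).add (hasDerivAt_const y (-996451875000 * t3 ^ 6))).congr_deriv (by push_cast; ring)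
  have hdd : HasDerivAt (fun z => d6 z t2 t3) (6 * y ^ 5 + -45 * t2 * y ^ 2 + 45 * t3) y :=
    ((((hasDerivAt_pow 6 y).add (((hasDerivAt_id y).const_mul 45).mul_const t3)).sub ((hasDerivAt_pow 3 y).const_mul (15 * t2))).sub (hasDerivAt_const y (45 * t2 ^ 2))).congr_deriv (by push_cast; ring)
  have hnum : p5 y t2 t3 = (-21600 * y ^ 29 + -6415200 * t2 * y ^ 26 + 165240000 * t3 * y ^ 24 + -657849600 * t2 ^ 2 * y ^ 23 + 3400056000 * t2 * t3 * y ^ 21 + -1714608000 * t2 ^ 3 * y ^ 20 + -36668700000 * t3 ^ 2 * y ^ 19 + 146432772000 * t2 ^ 2 * t3 * y ^ 18 + -184784004000 * t2 ^ 4 * y ^ 17 + 32345730000 * t2 * t3 ^ 2 * y ^ 16 + -552173760000 * t2 ^ 3 * t3 * y ^ 15 + 1369936800000 * t2 ^ 5 * y ^ 14 + 1018595250000 * t3 ^ 3 * y ^ 14 + -5192965890000 * t2 ^ 2 * t3 ^ 2 * y ^ 13 + 10590831810000 * t2 ^ 4 * t3 * y ^ 12 + -12334155120000 * t2 ^ 6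 * y ^ 11 + -2857971600000 * t2 * t3 ^ 3 * y ^ 11 + 18392779350000 * t2 ^ 3 * t3 ^ 2 * y ^ 10 + -36728478000000 * t2 ^ 5 * t3 * y ^ 9 + -3173883750000 * t3 ^ 4 * y ^ 9 + 45385061400000 * t2 ^ 7 * y ^ 8 + 18627007050000 * t2 ^ 2 * t3 ^ 3 * y ^ 8 + -60655132800000 * t2 ^ 4 * t3 ^ 2 * y ^ 7 + 68883610950000 * t2 ^ 6 * t3 * y ^ 6 + 3720087000000 * t2 * t3 ^ 4 * y ^ 6 + -77563813950000 * t2 ^ 8 * y ^ 5 + -3985807500000 * t2 ^ 3 * t3 ^ 3 * y ^ 5 + 37200870000000 * t2 ^ 5 * t3 ^ 2 * y ^ 4 + -664301250000 * t3 ^ 5 * y ^ 4 + -3720087000000 * t2 ^ 7 * t3 * y ^ 3 + -7174453500000 * t2 ^ 2 * t3 ^ 4 * y ^ 3 + 26970630750000 * t2 ^ 9 * y ^ 2 + -10363099500000 * t2 ^ 4 * t3 ^ 3 * y ^ 2 + -10230239250000 * t2 ^ 6 * t3 ^ 2 * y ^ 1 + 3985807500000 * t2 * t3 ^ 5 * y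 ^ 1 + -2790065250000 * t2 ^ 8 * t3 + 1992903750000 * t2 ^ 3 * t3 ^ 4) * d6 y t2 t3 - (((5 : ℕ) : ℝ) + 1) * (6 * y ^ 5 + -45 * t2 * y ^ 2 + 45 * t3) * p4 y t2 t3 := by
    simp only [p4, p5, d6]; push_cast; ring
  exact (hasDerivAt_div_pow 5 hP hdd h).congr_deriv (by rw [hnum])

lemma hopen (t2 t3 : ℝ) : IsOpen {y : ℝ | d6 y t2 t3 ≠ 0} := by
  have hc : Continuous fun y : ℝ => d6 y t2 t3 := by
    simp only [d6]; fun_prop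
  exact IsOpen.preimage hc isOpen_ne

lemma qd1 (t2 t3 : ℝ) : ∀ y : ℝ, d6 y t2 t3 ≠ 0 →
    deriv (fun z => qsol z t2 t3) y = p1 y t2 t3 / d6 y t2 t3 ^ 3 := by
  intro y h
  exact (step0 t2 t3 y h).deriv

lemma qd2 (t2 t3 : ℝ) : ∀ y : ℝ, d6 y t2 t3 ≠ 0 →
    iteratedDeriv 2 (fun z => qsol z t2 t3) y = p2 y t2 t3 / d6 y t2 t3 ^ 4 := by
  intro y h
  rw [show (2:ℕ) = 1 + 1 from rfl, iteratedDeriv_succ, iteratedDeriv_one]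
  have hev : (deriv (fun z => qsol z t2 t3)) =ᶠ[nhds y] (fun z => p1 z t2 t3 / d6 z t2 t3 ^ 3) := by
    filter_upwards [(hopen t2 t3).mem_nhds h] with z hz
    exact qd1 t2 t3 z hz
  rw [hev.deriv_eq]
  exact (step1 t2 t3 y h).deriv

lemma qd3 (t2 t3 : ℝ) : ∀ y : ℝ, d6 y t2 t3 ≠ 0 →
    iteratedDeriv 3 (fun z => qsol z t2 t3) y = p3 y t2 t3 / d6 y t2 t3 ^ 5 := by
  intro y h
  rw [show (3:ℕ) = 2 + 1 from rfl, iteratedDeriv_succ]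
  have hev : (iteratedDeriv 2 (fun z => qsol z t2 t3)) =ᶠ[nhds y] (fun z => p2 z t2 t3 / d6 z t2 t3 ^ 4) := by
    filter_upwards [(hopen t2 t3).mem_nhds h] with z hz
    exact qd2 t2 t3 z hz
  rw [hev.deriv_eq]
  exact (step2 t2 t3 y h).deriv

lemma qd4 (t2 t3 : ℝ) : ∀ y : ℝ, d6 y t2 t3 ≠ 0 →
    iteratedDeriv 4 (fun z => qsol z t2 t3) y = p4 y t2 t3 / d6 y t2 t3 ^ 6 := by
  intro y h
  rw [show (4:ℕ) = 3 + 1 from rfl, iteratedDeriv_succ]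
  have hev : (iteratedDeriv 3 (fun z => qsol z t2 t3)) =ᶠ[nhds y] (fun z => p3 z t2 t3 / d6 z t2 t3 ^ 5) := by
    filter_upwards [(hopen t2 t3).mem_nhds h] with z hz
    exact qd3 t2 t3 z hz
  rw [hev.deriv_eq]
  exact (step3 t2 t3 y h).deriv

lemma qd5 (t2 t3 : ℝ) : ∀ y : ℝ, d6 y t2 t3 ≠ 0 →
    iteratedDeriv 5 (fun z => qsol z t2 t3) y = p5 y t2 t3 / d6 y t2 t3 ^ 7 := by
  intro y h
  rw [show (5:ℕ) = 4 + 1 from rfl, iteratedDeriv_succ]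
  have hev : (iteratedDeriv 4 (fun z => qsol z t2 t3)) =ᶠ[nhds y] (fun z => p4 z t2 t3 / d6 z t2 t3 ^ 6) := by
    filter_upwards [(hopen t2 t3).mem_nhds h] with z hz
    exact qd4 t2 t3 z hz
  rw [hev.deriv_eq]
  exact (step4 t2 t3 y h).deriv

lemma ht2lem (x t2 t3 : ℝ) (h : d6 x t2 t3 ≠ 0) :
    HasDerivAt (fun s => qsol x s t3) (q2n x t2 t3 / d6 x t2 t3 ^ 3) t2 := by
  have hP : HasDerivAt (fun s => -3 * (675 * t3 ^ 2 - 270 * t3 * x ^ 5 + 2 * x ^ 10 + 675 * x ^ 4 * s ^ 2 - 1350 * x * s ^ 3)) (-4050 * t2 * x ^ 4 + 12150 * t2 ^ 2 * x ^ 1) t2 :=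
    ((((((hasDerivAt_const t2 (675 * t3 ^ 2)).sub (hasDerivAt_const t2 (270 * t3 * x ^ 5))).add (hasDerivAt_const t2 (2 * x ^ 10))).add ((hasDerivAt_pow 2 t2).const_mul (675 * x ^ 4))).sub ((hasDerivAt_pow 3 t2).const_mul (1350 * x))).const_mul (-3)).congr_deriv (by push_cast; ring)
  have hdd : HasDerivAt (fun s => x ^ 6 + 45 * x * t3 - 15 * s * x ^ 3 - 45 * s ^ 2) (-15 * x ^ 3 + -90 * t2) t2 :=
    ((((hasDerivAt_const t2 (x ^ 6)).add (hasDerivAt_const t2 (45 * x * t3))).sub (((hasDerivAt_id t2).const_mul 15).mul_const (x ^ 3))).sub ((hasDerivAt_pow 2 t2).const_mul 45)).congr_deriv (by push_cast; ring)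
  have h0 : (x ^ 6 + 45 * x * t3 - 15 * t2 * x ^ 3 - 45 * t2 ^ 2) ≠ 0 := h
  have hnum : q2n x t2 t3 = (-4050 * t2 * x ^ 4 + 12150 * t2 ^ 2 * x ^ 1) * (x ^ 6 + 45 * x * t3 - 15 * t2 * x ^ 3 - 45 * t2 ^ 2) - (((1 : ℕ) : ℝ) + 1) * (-15 * x ^ 3 + -90 * t2) * (-3 * (675 * t3 ^ 2 - 270 * t3 * x ^ 5 + 2 * x ^ 10 + 675 * x ^ 4 * t2 ^ 2 - 1350 * x * t2 ^ 3)) := by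
    simp only [q2n]; push_cast; ring
  exact (hasDerivAt_div_pow 1 hP hdd h0).congr_deriv (by rw [hnum]; simp only [d6])

lemma ht3lem (x t2 t3 : ℝ) (h : d6 x t2 t3 ≠ 0) :
    HasDerivAt (fun s => qsol x t2 s) (q3n x t2 t3 / d6 x t2 t3 ^ 3) t3 := by
  have hP : HasDerivAt (fun s => -3 * (675 * s ^ 2 - 270 * s * x ^ 5 + 2 * x ^ 10 + 675 * x ^ 4 * t2 ^ 2 - 1350 * x * t2 ^ 3)) (810 * x ^ 5 + -4050 * t3) t3 :=
    (((((((hasDerivAt_pow 2 t3).const_mul 675).sub (((hasDerivAt_id t3).const_mul 270).mul_const (x ^ 5))).add (hasDerivAt_const t3 (2 * x ^ 10))).add (hasDerivAt_const t3 (675 * x ^ 4 * t2 ^ 2))).sub (hasDerivAt_const t3 (1350 * x * t2 ^ 3))).const_mul (-3)).congr_deriv (by push_cast; ring)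
  have hdd : HasDerivAt (fun s => x ^ 6 + 45 * x * s - 15 * t2 * x ^ 3 - 45 * t2 ^ 2) (45 * x ^ 1) t3 :=
    ((((hasDerivAt_const t3 (x ^ 6)).add ((hasDerivAt_id t3).const_mul (45 * x))).sub (hasDerivAt_const t3 (15 * t2 * x ^ 3))).sub (hasDerivAt_const t3 (45 * t2 ^ 2))).congr_deriv (by push_cast; ring)
  have h0 : (x ^ 6 + 45 * x * t3 - 15 * t2 * x ^ 3 - 45 * t2 ^ 2) ≠ 0 := h
  have hnum : q3n x t2 t3 = (810 * x ^ 5 + -4050 * t3) * (x ^ 6 + 45 * x * t3 - 15 * t2 * x ^ 3 - 45 * t2 ^ 2) - (((1 : ℕ) : ℝ) + 1) * (45 * x ^ 1) * (-3 * (675 * t3 ^ 2 - 270 * t3 * x ^ 5 + 2 * x ^ 10 + 675 * x ^ 4 * t2 ^ 2 - 1350 * x * t2 ^ 3)) := by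
    simp only [q3n]; push_cast; ring
  exact (hasDerivAt_div_pow 1 hP hdd h0).congr_deriv (by rw [hnum]; simp only [d6])

/-- On the set where `x⁶ + 45xt₃ − 15t₂x³ − 45t₂² ≠ 0`, the rational function `qsol`
simultaneously solves the second and the third KdV flows. -/
theorem rational_solution_kdv_flows :
    ∀ x t2 t3 : ℝ, x ^ 6 + 45 * x * t3 - 15 * t2 * x ^ 3 - 45 * t2 ^ 2 ≠ 0 →
      (deriv (fun s => qsol x s t3) t2
        = (1 / 4) * iteratedDeriv 3 (fun y => qsol y t2 t3) x
          + 3 * qsol x t2 t3 * deriv (fun y => qsol y t2 t3) x)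
      ∧ (deriv (fun s => qsol x t2 s) t3
        = (1 / 16) * iteratedDeriv 5 (fun y => qsol y t2 t3) x
          + (5 / 2) * deriv (fun y => qsol y t2 t3) x
              * iteratedDeriv 2 (fun y => qsol y t2 t3) x
          + (5 / 4) * qsol x t2 t3 * iteratedDeriv 3 (fun y => qsol y t2 t3) x
          + (15 / 2) * qsol x t2 t3 ^ 2 * deriv (fun y => qsol y t2 t3) x) := by
  intro x t2 t3 h
  have hd0 : d6 x t2 t3 ≠ 0 := h
  have hq : qsol x t2 t3 = p0 x t2 t3 / d6 x t2 t3 ^ 2 := by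
    simp only [qsol, p0, d6]; ring
  have h1 : deriv (fun y => qsol y t2 t3) x = p1 x t2 t3 / d6 x t2 t3 ^ 3 := qd1 t2 t3 x hd0
  have h2 : iteratedDeriv 2 (fun y => qsol y t2 t3) x = p2 x t2 t3 / d6 x t2 t3 ^ 4 := qd2 t2 t3 x hd0
  have h3 : iteratedDeriv 3 (fun y => qsol y t2 t3) x = p3 x t2 t3 / d6 x t2 t3 ^ 5 := qd3 t2 t3 x hd0
  have h5 : iteratedDeriv 5 (fun y => qsol y t2 t3) x = p5 x t2 t3 / d6 x t2 t3 ^ 7 := qd5 t2 t3 x hd0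
  constructor
  · rw [(ht2lem x t2 t3 hd0).deriv, h3, h1, hq]
    have key2 : q2n x t2 t3 * d6 x t2 t3 ^ 2
        = 1 / 4 * p3 x t2 t3 + 3 * p0 x t2 t3 * p1 x t2 t3 := by
      simp only [q2n, p3, p0, p1, d6]; ring
    rw [show 1 / 4 * (p3 x t2 t3 / d6 x t2 t3 ^ 5)
          + 3 * (p0 x t2 t3 / d6 x t2 t3 ^ 2) * (p1 x t2 t3 / d6 x t2 t3 ^ 3)
        = (1 / 4 * p3 x t2 t3 + 3 * p0 x t2 t3 * p1 x t2 t3) / d6 x t2 t3 ^ 5 by ring,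
      ← key2]
    rw [div_eq_div_iff (pow_ne_zero _ hd0) (pow_ne_zero _ hd0)]
    ring
  · rw [(ht3lem x t2 t3 hd0).deriv, h5, h1, h2, h3, hq]
    have key3 : q3n x t2 t3 * d6 x t2 t3 ^ 4
        = 1 / 16 * p5 x t2 t3 + 5 / 2 * p1 x t2 t3 * p2 x t2 t3
          + 5 / 4 * p0 x t2 t3 * p3 x t2 t3 + 15 / 2 * p0 x t2 t3 ^ 2 * p1 x t2 t3 := by
      simp only [q3n, p5, p0, p1, p2, p3, d6]; ring
    rw [show 1 / 16 * (p5 x t2 t3 / d6 x t2 t3 ^ 7)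
          + 5 / 2 * (p1 x t2 t3 / d6 x t2 t3 ^ 3) * (p2 x t2 t3 / d6 x t2 t3 ^ 4)
          + 5 / 4 * (p0 x t2 t3 / d6 x t2 t3 ^ 2) * (p3 x t2 t3 / d6 x t2 t3 ^ 5)
          + 15 / 2 * (p0 x t2 t3 / d6 x t2 t3 ^ 2) ^ 2 * (p1 x t2 t3 / d6 x t2 t3 ^ 3)
        = (1 / 16 * p5 x t2 t3 + 5 / 2 * p1 x t2 t3 * p2 x t2 t3
          + 5 / 4 * p0 x t2 t3 * p3 x t2 t3 + 15 / 2 * p0 x t2 t3 ^ 2 * p1 x t2 t3)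
            / d6 x t2 t3 ^ 7 by ring,
      ← key3]
    rw [div_eq_div_iff (pow_ne_zero _ hd0) (pow_ne_zero _ hd0)]
    ring
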